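/- If s = f(φ, x) and t = g(ψ, x) for deterministic functions f, g and a random variable x independent of the independent pair (φ, ψ), then the quadruple (φ, ψ, s, t) is classically generated, and hence disjoint: P(ψ | φ, s) = P(ψ) and P(φ | ψ, t) = P(φ). -/

import Mathlib

variable {S T Φ Ψ : Type*} [Fintype S] [Fintype T] [Fintype Φ] [Fintype Ψ]

/-- `p` is a joint probability distribution of `(s, t, φ, ψ)`. -/
def IsDist (p : S → T → Φ → Ψ → ℝ) : Prop :=
  (∀ s t φ ψ, 0 ≤ p s t φ ψ) ∧ ∑ s, ∑ t, ∑ φ, ∑ ψ, p s t φ ψ = 1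

/-- Marginal `p(φ)`. -/
def mΦ (p : S → T → Φ → Ψ → ℝ) (φ : Φ) : ℝ := ∑ s, ∑ t, ∑ ψ, p s t φ ψ
/-- Marginal `p(ψ)`. -/
def mΨ (p : S → T → Φ → Ψ → ℝ) (ψ : Ψ) : ℝ := ∑ s, ∑ t, ∑ φ, p s t φ ψ
/-- Marginal `p(t)`. -/
def mT (p : S → T → Φ → Ψ → ℝ) (t : T) : ℝ := ∑ s, ∑ φ, ∑ ψ, p s t φ ψ
/-- Marginal `p(φ, ψ)`. -/
def mΦΨ (p : S → T → Φ → Ψ → ℝ) (φ : Φ) (ψ : Ψ) : ℝ := ∑ s, ∑ t, p s t φ ψ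
/-- Marginal `p(φ, s)`. -/
def mΦS (p : S → T → Φ → Ψ → ℝ) (φ : Φ) (s : S) : ℝ := ∑ t, ∑ ψ, p s t φ ψ
/-- Marginal `p(ψ, t)`. -/
def mΨT (p : S → T → Φ → Ψ → ℝ) (ψ : Ψ) (t : T) : ℝ := ∑ s, ∑ φ, p s t φ ψ
/-- Marginal `p(ψ, φ, s)`. -/
def mΨΦS (p : S → T → Φ → Ψ → ℝ) (ψ : Ψ) (φ : Φ) (s : S) : ℝ := ∑ t, p s t φ ψ
/-- Marginal `p(φ, ψ, t)`. -/
def mΦΨT (p : S → T → Φ → Ψ → ℝ) (φ : Φ) (ψ : Ψ) (t : T) : ℝ := ∑ s, p s t φ ψ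
/-- Marginal `p(t, φ)`. -/
def mTΦ (p : S → T → Φ → Ψ → ℝ) (t : T) (φ : Φ) : ℝ := ∑ s, ∑ ψ, p s t φ ψ
/-- Marginal `p(s, t, φ)`. -/
def mSTΦ (p : S → T → Φ → Ψ → ℝ) (s : S) (t : T) (φ : Φ) : ℝ := ∑ ψ, p s t φ ψ

/-- `φ` and `ψ` are independent under `p`. -/
def IndepStates (p : S → T → Φ → Ψ → ℝ) : Prop :=
  ∀ φ ψ, mΦΨ p φ ψ = mΦ p φ * mΨ p ψ

/-- The signals are disjoint: `P(ψ | φ, s) = P(ψ | φ)` and `P(φ | ψ, t) = P(φ | ψ)`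
whenever the conditioning events have positive probability. -/
def Disjoint' (p : S → T → Φ → Ψ → ℝ) : Prop :=
  (∀ ψ φ s, 0 < mΦS p φ s →
      mΨΦS p ψ φ s / mΦS p φ s = mΦΨ p φ ψ / mΦ p φ) ∧
  (∀ φ ψ t, 0 < mΨT p ψ t →
      mΦΨT p φ ψ t / mΨT p ψ t = mΦΨ p φ ψ / mΨ p ψ)

/-- The signals are classically generated: there is a finitely-valued shared
random variable `x` (with distribution `μ`), independent of `(φ, ψ)`, and
response kernels `f(s | x, φ)`, `g(t | x, ψ)` such that the joint distribution
is `p(s,t,φ,ψ) = p(φ) p(ψ) ∑_x μ(x) f(s|x,φ) g(t|x,ψ)`; equivalently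
`p(s,t | x, φ, ψ) = p(s | x, φ) · p(t | x, ψ)` with `x ⊥ (φ, ψ)`. -/
def ClassicallyGenerated (p : S → T → Φ → Ψ → ℝ) : Prop :=
  ∃ (k : ℕ) (μ : Fin k → ℝ) (f : Fin k → Φ → S → ℝ) (g : Fin k → Ψ → T → ℝ),
    (∀ x, 0 ≤ μ x) ∧ (∑ x, μ x = 1) ∧
    (∀ x φ s, 0 ≤ f x φ s) ∧ (∀ x φ, ∑ s, f x φ s = 1) ∧
    (∀ x ψ t, 0 ≤ g x ψ t) ∧ (∀ x ψ, ∑ t, g x ψ t = 1) ∧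
    (∀ s t φ ψ, p s t φ ψ = mΦ p φ * mΨ p ψ * ∑ x, μ x * f x φ s * g x ψ t)

/-- If `s = f(φ, x)` and `t = g(ψ, x)` for deterministic `f, g` and `x`
independent of the independent pair `(φ, ψ)`, then `(φ, ψ, s, t)` is classically
generated, and hence disjoint, with `P(ψ | φ, s) = P(ψ)` and
`P(φ | ψ, t) = P(φ)`. -/
theorem deterministic_functions_classicallyGenerated
    [DecidableEq S] [DecidableEq T] (k : ℕ)
    (pΦ : Φ → ℝ) (pΨ : Ψ → ℝ) (μ : Fin k → ℝ)
    (hpΦ : ∀ φ, 0 ≤ pΦ φ) (hpΦ1 : ∑ φ, pΦ φ = 1)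
    (hpΨ : ∀ ψ, 0 ≤ pΨ ψ) (hpΨ1 : ∑ ψ, pΨ ψ = 1)
    (hμ : ∀ x, 0 ≤ μ x) (hμ1 : ∑ x, μ x = 1)
    (f : Φ → Fin k → S) (g : Ψ → Fin k → T)
    (p : S → T → Φ → Ψ → ℝ)
    (hpdef : ∀ s t φ ψ, p s t φ ψ = pΦ φ * pΨ ψ *
      ∑ x, μ x * (if f φ x = s then (1 : ℝ) else 0) *
        (if g ψ x = t then (1 : ℝ) else 0)) :
    ClassicallyGenerated p ∧
    (∀ ψ φ s, 0 < mΦS p φ s → mΨΦS p ψ φ s / mΦS p φ s = pΨ ψ) ∧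
    (∀ φ ψ t, 0 < mΨT p ψ t → mΦΨT p φ ψ t / mΨT p ψ t = pΦ φ) := by
  -- abbreviations for the kernels
  set F : Fin k → Φ → S → ℝ := fun x φ s => if f φ x = s then 1 else 0 with hF
  set G : Fin k → Ψ → T → ℝ := fun x ψ t => if g ψ x = t then 1 else 0 with hG
  have hFsum : ∀ x φ, ∑ s, F x φ s = 1 := by
    intro x φ; simp [hF]
  have hGsum : ∀ x ψ, ∑ t, G x ψ t = 1 := by
    intro x ψ; simp [hG]
  have hFnn : ∀ x φ s, 0 ≤ F x φ s := by
    intro x φ s; simp only [hF]; split <;> norm_num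
  have hGnn : ∀ x ψ t, 0 ≤ G x ψ t := by
    intro x ψ t; simp only [hG]; split <;> norm_num
  have hsum_t : ∀ s φ ψ, ∑ t, p s t φ ψ = pΦ φ * pΨ ψ * ∑ x, μ x * F x φ s := by
    intro s φ ψ
    simp only [hpdef, ← Finset.mul_sum]
    congr 1
    rw [Finset.sum_comm]
    refine Finset.sum_congr rfl fun x _ => ?_
    simp [hF, hG, mul_ite, mul_one, mul_zero]
  have hsum_s : ∀ t φ ψ, ∑ s, p s t φ ψ = pΦ φ * pΨ ψ * ∑ x, μ x * G x ψ t := by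
    intro t φ ψ
    simp only [hpdef, ← Finset.mul_sum]
    congr 1
    rw [Finset.sum_comm]
    refine Finset.sum_congr rfl fun x _ => ?_
    simp [hF, hG, Finset.mul_sum, mul_comm, mul_assoc, mul_left_comm]
  have hsum_st : ∀ φ ψ, ∑ s, ∑ t, p s t φ ψ = pΦ φ * pΨ ψ := by
    intro φ ψ
    simp only [hsum_t, ← Finset.mul_sum]
    rw [Finset.sum_comm]
    simp only [← Finset.mul_sum, hFsum, mul_one, hμ1]
  have hmPhi : ∀ φ, mΦ p φ = pΦ φ := by
    intro φ
    unfold mΦ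
    calc (∑ s, ∑ t, ∑ ψ, p s t φ ψ) = ∑ ψ, ∑ s, ∑ t, p s t φ ψ := by
          rw [show (∑ s, ∑ t, ∑ ψ, p s t φ ψ) = ∑ s, ∑ ψ, ∑ t, p s t φ ψ from
            Finset.sum_congr rfl fun s _ => Finset.sum_comm, Finset.sum_comm]
      _ = ∑ ψ, pΦ φ * pΨ ψ := by simp [hsum_st]
      _ = pΦ φ := by rw [← Finset.mul_sum, hpΨ1, mul_one]
  have hmPsi : ∀ ψ, mΨ p ψ = pΨ ψ := by
    intro ψ
    unfold mΨ
    calc (∑ s, ∑ t, ∑ φ, p s t φ ψ) = ∑ φ, ∑ s, ∑ t, p s t φ ψ := by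
          rw [show (∑ s, ∑ t, ∑ φ, p s t φ ψ) = ∑ s, ∑ φ, ∑ t, p s t φ ψ from
            Finset.sum_congr rfl fun s _ => Finset.sum_comm, Finset.sum_comm]
      _ = ∑ φ, pΦ φ * pΨ ψ := by simp [hsum_st]
      _ = pΨ ψ := by rw [← Finset.sum_mul, hpΦ1, one_mul]
  have hmΨΦS : ∀ ψ φ s, mΨΦS p ψ φ s = pΦ φ * pΨ ψ * ∑ x, μ x * F x φ s := by
    intro ψ φ s; unfold mΨΦS; exact hsum_t s φ ψ
  have hmΦS : ∀ φ s, mΦS p φ s = pΦ φ * ∑ x, μ x * F x φ s := by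
    intro φ s
    unfold mΦS
    rw [Finset.sum_comm]
    calc (∑ ψ, ∑ t, p s t φ ψ) = ∑ ψ, pΦ φ * pΨ ψ * ∑ x, μ x * F x φ s := by
          simp [hsum_t]
      _ = pΦ φ * ∑ x, μ x * F x φ s := by
          rw [← Finset.sum_mul]; rw [← Finset.mul_sum, hpΨ1, mul_one]
  have hmΦΨT : ∀ φ ψ t, mΦΨT p φ ψ t = pΦ φ * pΨ ψ * ∑ x, μ x * G x ψ t := by
    intro φ ψ t; unfold mΦΨT; exact hsum_s t φ ψ
  have hmΨT : ∀ ψ t, mΨT p ψ t = pΨ ψ * ∑ x, μ x * G x ψ t := by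
    intro ψ t
    unfold mΨT
    rw [Finset.sum_comm]
    calc (∑ φ, ∑ s, p s t φ ψ) = ∑ φ, pΦ φ * pΨ ψ * ∑ x, μ x * G x ψ t := by
          simp [hsum_s]
      _ = pΨ ψ * ∑ x, μ x * G x ψ t := by
          rw [← Finset.sum_mul, ← Finset.sum_mul, hpΦ1, one_mul]
  refine ⟨⟨k, μ, F, G, hμ, hμ1, hFnn, hFsum, hGnn, hGsum, ?_⟩, ?_, ?_⟩
  · intro s t φ ψ
    rw [hmPhi, hmPsi, hpdef]
  · intro ψ φ s hpos
    rw [hmΨΦS, hmΦS]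
    have h : pΦ φ * ∑ x, μ x * F x φ s ≠ 0 := by
      rw [← hmΦS]; exact ne_of_gt hpos
    rw [div_eq_iff h]
    ring
  · intro φ ψ t hpos
    rw [hmΦΨT, hmΨT]
    have h : pΨ ψ * ∑ x, μ x * G x ψ t ≠ 0 := by
      rw [← hmΨT]; exact ne_of_gt hpos
    rw [div_eq_iff h]
    ring
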